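/- The sum operation ⊕ on fuzzy left ideals of a Γ-semiring is associative: (μ₁⊕μ₂)⊕μ₃ = μ₁⊕(μ₂⊕μ₃); moreover, for each x ∈ S, ((μ₁⊕μ₂)⊕μ₃)(x) = sup{min(μ₁(p),μ₂(q),μ₃(v)) : x = p+q+v}. -/
import Mathlib


open Classical

/-- A Γ-semiring: additive commutative monoids `S` and `G` with a triadditive,
associative product `tmul : S → G → S → S` for which zero is absorbing. -/
class GammaSemiring (S : Type*) (G : Type*) [AddCommMonoid S] [AddCommMonoid G] where
  tmul : S → G → S → S
  add_tmul : ∀ (a b : S) (γ : G) (c : S), tmul (a + b) γ c = tmul a γ c + tmul b γ c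
  tmul_add : ∀ (a : S) (γ : G) (b c : S), tmul a γ (b + c) = tmul a γ b + tmul a γ c
  tmul_gadd : ∀ (a : S) (γ δ : G) (b : S), tmul a (γ + δ) b = tmul a γ b + tmul a δ b
  tmul_assoc : ∀ (a : S) (γ : G) (b : S) (δ : G) (c : S),
      tmul a γ (tmul b δ c) = tmul (tmul a γ b) δ c
  zero_tmul : ∀ (γ : G) (x : S), tmul 0 γ x = 0
  tmul_zero : ∀ (x : S) (γ : G), tmul x γ 0 = 0
  tmul_gzero : ∀ (x y : S), tmul x 0 y = 0

/-- μ is a fuzzy left ideal: `[0,1]`-valued, `μ 0 = 1`, superadditive under `min`,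
and `μ (xγy) ≥ μ y`. -/
def IsFuzzyLeftIdeal (S G : Type*) [AddCommMonoid S] [AddCommMonoid G]
    [GammaSemiring S G] (μ : S → ℝ) : Prop :=
  (∀ x, μ x ∈ Set.Icc (0 : ℝ) 1) ∧ μ 0 = 1 ∧
  (∀ x y, min (μ x) (μ y) ≤ μ (x + y)) ∧
  (∀ (x : S) (γ : G) (y : S), μ y ≤ μ (GammaSemiring.tmul x γ y))

/-- μ is a fuzzy right ideal. -/
def IsFuzzyRightIdeal (S G : Type*) [AddCommMonoid S] [AddCommMonoid G]
    [GammaSemiring S G] (μ : S → ℝ) : Prop :=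
  (∀ x, μ x ∈ Set.Icc (0 : ℝ) 1) ∧ μ 0 = 1 ∧
  (∀ x y, min (μ x) (μ y) ≤ μ (x + y)) ∧
  (∀ (x : S) (γ : G) (y : S), μ x ≤ μ (GammaSemiring.tmul x γ y))

/-- μ is a fuzzy (two-sided) ideal. -/
def IsFuzzyIdeal (S G : Type*) [AddCommMonoid S] [AddCommMonoid G]
    [GammaSemiring S G] (μ : S → ℝ) : Prop :=
  (∀ x, μ x ∈ Set.Icc (0 : ℝ) 1) ∧ μ 0 = 1 ∧
  (∀ x y, min (μ x) (μ y) ≤ μ (x + y)) ∧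
  (∀ (x : S) (γ : G) (y : S), max (μ x) (μ y) ≤ μ (GammaSemiring.tmul x γ y))

/-- The sum `μ ⊕ ν` of fuzzy subsets: `(μ ⊕ ν)(x) = sup { min (μ u) (ν v) : x = u + v }`. -/
noncomputable def fSum {S : Type*} [AddCommMonoid S] (μ ν : S → ℝ) : S → ℝ := fun x =>
  sSup {r : ℝ | ∃ u v : S, x = u + v ∧ r = min (μ u) (ν v)}

/-- The product `μ Γ ν`: `(μ Γ ν)(x) = sup { min (μ u) (ν v) : x = uγv }`
(`sSup ∅ = 0` in `ℝ`, matching the convention that it is `0` with no representation). -/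
noncomputable def fProd (S G : Type*) [AddCommMonoid S] [AddCommMonoid G]
    [GammaSemiring S G] (μ ν : S → ℝ) : S → ℝ := fun x =>
  sSup {r : ℝ | ∃ (u : S) (γ : G) (v : S),
    x = GammaSemiring.tmul u γ v ∧ r = min (μ u) (ν v)}

/-- The composition `μ ∘ ν`:
`(μ ∘ ν)(x) = sup { min_{1 ≤ i ≤ n} min (μ uᵢ) (ν vᵢ) : x = Σᵢ uᵢγᵢvᵢ, n ≥ 1 }`. -/
noncomputable def fComp (S G : Type*) [AddCommMonoid S] [AddCommMonoid G]
    [GammaSemiring S G] (μ ν : S → ℝ) : S → ℝ := fun x =>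
  sSup {r : ℝ | ∃ (n : ℕ) (u v : Fin (n + 1) → S) (γ : Fin (n + 1) → G),
    x = ∑ i, GammaSemiring.tmul (u i) (γ i) (v i) ∧
    r = Finset.univ.inf' Finset.univ_nonempty (fun i => min (μ (u i)) (ν (v i)))}

lemma fSum_set_nonempty {S : Type*} [AddCommMonoid S] (μ ν : S → ℝ) (x : S) :
    {r : ℝ | ∃ u v : S, x = u + v ∧ r = min (μ u) (ν v)}.Nonempty :=
  ⟨min (μ x) (ν 0), x, 0, (add_zero x).symm, rfl⟩

lemma fSum_set_bdd {S : Type*} [AddCommMonoid S] {μ ν : S → ℝ}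
    (hν : ∀ y, ν y ≤ 1) (x : S) :
    BddAbove {r : ℝ | ∃ u v : S, x = u + v ∧ r = min (μ u) (ν v)} := by
  refine ⟨1, ?_⟩
  rintro r ⟨u, v, -, rfl⟩
  exact le_trans (min_le_right _ _) (hν v)

lemma fSum_le_one {S : Type*} [AddCommMonoid S] {μ ν : S → ℝ}
    (hν : ∀ y, ν y ≤ 1) (x : S) : fSum μ ν x ≤ 1 := by
  apply csSup_le (fSum_set_nonempty μ ν x)
  rintro r ⟨u, v, -, rfl⟩
  exact le_trans (min_le_right _ _) (hν v)

lemma le_fSum {S : Type*} [AddCommMonoid S] {μ ν : S → ℝ}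
    (hν : ∀ y, ν y ≤ 1) {x u v : S} (h : x = u + v) :
    min (μ u) (ν v) ≤ fSum μ ν x :=
  le_csSup (fSum_set_bdd hν x) ⟨u, v, h, rfl⟩

lemma min_csSup_le {A : Set ℝ} (hA : A.Nonempty) (hb : BddAbove A) {c s : ℝ}
    (h : ∀ a ∈ A, min a c ≤ s) : min (sSup A) c ≤ s := by
  rcases le_total (sSup A) c with h1 | h1
  · rw [min_eq_left h1]
    refine csSup_le hA fun a ha => ?_
    have := h a ha
    rwa [min_eq_left (le_trans (le_csSup hb ha) h1)] at this
  · rw [min_eq_right h1]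
    refine le_of_forall_lt fun d hd => ?_
    obtain ⟨a, ha, hda⟩ := exists_lt_of_lt_csSup hA (lt_of_lt_of_le hd h1)
    exact lt_of_lt_of_le (lt_min hda hd) (h a ha)

theorem fSum_assoc {S G : Type*} [AddCommMonoid S] [AddCommMonoid G]
    [GammaSemiring S G] (μ₁ μ₂ μ₃ : S → ℝ)
    (h₁ : IsFuzzyLeftIdeal S G μ₁) (h₂ : IsFuzzyLeftIdeal S G μ₂)
    (h₃ : IsFuzzyLeftIdeal S G μ₃) :
    fSum (fSum μ₁ μ₂) μ₃ = fSum μ₁ (fSum μ₂ μ₃) ∧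
    ∀ x : S, fSum (fSum μ₁ μ₂) μ₃ x =
      sSup {r : ℝ | ∃ p q v : S, x = p + q + v ∧
        r = min (μ₁ p) (min (μ₂ q) (μ₃ v))} := by
  have hb₁ : ∀ y, μ₁ y ≤ 1 := fun y => (h₁.1 y).2
  have hb₂ : ∀ y, μ₂ y ≤ 1 := fun y => (h₂.1 y).2
  have hb₃ : ∀ y, μ₃ y ≤ 1 := fun y => (h₃.1 y).2
  set T : S → Set ℝ := fun x => {r : ℝ | ∃ p q v : S, x = p + q + v ∧
      r = min (μ₁ p) (min (μ₂ q) (μ₃ v))} with hT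
  have hTne : ∀ x, (T x).Nonempty := fun x =>
    ⟨min (μ₁ x) (min (μ₂ 0) (μ₃ 0)), x, 0, 0, by simp, rfl⟩
  have hTbdd : ∀ x, BddAbove (T x) := by
    intro x
    refine ⟨1, ?_⟩
    rintro r ⟨p, q, v, -, rfl⟩
    exact le_trans (min_le_left _ _) (hb₁ p)
  have hleft : ∀ x, fSum (fSum μ₁ μ₂) μ₃ x = sSup (T x) := by
    intro x
    apply le_antisymm
    · apply csSup_le (fSum_set_nonempty _ _ x)
      rintro r ⟨u, v, hx, rfl⟩
      apply min_csSup_le (fSum_set_nonempty μ₁ μ₂ u) (fSum_set_bdd hb₂ u)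
      rintro a ⟨p, q, hu, rfl⟩
      refine le_csSup (hTbdd x) ⟨p, q, v, by rw [hx, hu], ?_⟩
      rw [min_assoc]
    · apply csSup_le (hTne x)
      rintro r ⟨p, q, v, hx, rfl⟩
      rw [← min_assoc]
      calc min (min (μ₁ p) (μ₂ q)) (μ₃ v)
          ≤ min (fSum μ₁ μ₂ (p + q)) (μ₃ v) :=
            min_le_min (le_fSum hb₂ rfl) le_rfl
        _ ≤ fSum (fSum μ₁ μ₂) μ₃ x := le_fSum hb₃ hx
  have hright : ∀ x, fSum μ₁ (fSum μ₂ μ₃) x = sSup (T x) := by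
    intro x
    apply le_antisymm
    · apply csSup_le (fSum_set_nonempty _ _ x)
      rintro r ⟨u, v, hx, rfl⟩
      rw [min_comm]
      apply min_csSup_le (fSum_set_nonempty μ₂ μ₃ v) (fSum_set_bdd hb₃ v)
      rintro a ⟨q, w, hv, rfl⟩
      refine le_csSup (hTbdd x) ⟨u, q, w, by rw [hx, hv, add_assoc], ?_⟩
      rw [min_comm]
    · apply csSup_le (hTne x)
      rintro r ⟨p, q, v, hx, rfl⟩
      calc min (μ₁ p) (min (μ₂ q) (μ₃ v))
          ≤ min (μ₁ p) (fSum μ₂ μ₃ (q + v)) :=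
            min_le_min le_rfl (le_fSum hb₃ rfl)
        _ ≤ fSum μ₁ (fSum μ₂ μ₃) x := by
            refine le_fSum ?_ (by rw [hx, add_assoc])
            exact fSum_le_one hb₃
  exact ⟨funext fun x => (hleft x).trans (hright x).symm, hleft⟩
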